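/- (Proposition 2) Assume the ball-constraint assumption with bounds ℓ, u, and assume (OPF) is feasible. Let α* ∈ ℝ^K be an optimal solution of (DSDP), i.e. α*_k ≥ 0 for all k, S* := C + Σ_{k∈K} α*_k A_k is positive semidefinite, and Σ_{k∈K} −b_k α*_k equals the supremum of the (DSDP) objective over its feasible set. Then the optimal value of (SDP) equals the optimal value of (ŌPF_{S*}), and for every real symmetric positive semidefinite 2n×2n matrix S, the optimal value of (ŌPF_S) is at most the optimal value of (SDP); that is, S* maximizes v(ŌPF_S) over positive semidefinite S and v(SDP) = max_{S⪰0} v(ŌPF_S) = v(ŌPF_{S*}). -/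

import Mathlib

open Matrix

noncomputable section

/-- Trace inner product ⟨A,B⟩ = trace(AB). -/
def ip {m : ℕ} (A B : Matrix (Fin m) (Fin m) ℝ) : ℝ := (A * B).trace

/-- Quadratic form xᵀ A x. -/
def qf {m : ℕ} (A : Matrix (Fin m) (Fin m) ℝ) (x : Fin m → ℝ) : ℝ := x ⬝ᵥ A.mulVec x

/-- Index of the real part of the voltage at node `i` among the `2n` coordinates. -/
def idx1 (n : ℕ) (i : Fin n) : Fin (2 * n) := ⟨i.val, by have := i.isLt; omega⟩

/-- Index of the imaginary part of the voltage at node `i` among the `2n` coordinates. -/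
def idx2 (n : ℕ) (i : Fin n) : Fin (2 * n) := ⟨i.val + n, by have := i.isLt; omega⟩

/-- The matrix of the ball constraint at node `i`: diagonal, with ones exactly in
positions `(i,i)` and `(i+n, i+n)`. -/
def ballMat (n : ℕ) (i : Fin n) : Matrix (Fin (2 * n)) (Fin (2 * n)) ℝ :=
  Matrix.diagonal (fun j => if j = idx1 n i ∨ j = idx2 n i then 1 else 0)

/-- The four McCormick inequalities relating `Y i j` to `x i`, `x j` and bounds `l, u`,
for all pairs of indices `i ≤ j`. -/
def mcCormick {m : ℕ} (l u x : Fin m → ℝ) (Y : Matrix (Fin m) (Fin m) ℝ) : Prop :=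
  ∀ i j : Fin m, i ≤ j →
    Y i j ≤ u j * x i + l i * x j - l i * u j ∧
    Y i j ≤ l j * x i + u i * x j - u i * l j ∧
    Y i j ≥ u j * x i + u i * x j - u i * u j ∧
    Y i j ≥ l j * x i + l i * x j - l i * l j

/-- The set of objective values of the relaxed reformulation (ŌPF_S). -/
def OPFSbarVals {n : ℕ} {K : Type} [Fintype K]
    (C : Matrix (Fin (2 * n)) (Fin (2 * n)) ℝ)
    (A : K → Matrix (Fin (2 * n)) (Fin (2 * n)) ℝ) (b : K → ℝ)
    (l u : Fin (2 * n) → ℝ)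
    (S : Matrix (Fin (2 * n)) (Fin (2 * n)) ℝ) : Set ℝ :=
  {v : ℝ | ∃ (x : Fin (2 * n) → ℝ) (Y : Matrix (Fin (2 * n)) (Fin (2 * n)) ℝ),
      Y.IsSymm ∧ (∀ k, ip (A k) Y ≤ b k) ∧ mcCormick l u x Y ∧
      v = qf S x + ip (C - S) Y}


section Helpers
variable {m : ℕ} {K : Type} [Fintype K]

lemma ipEq (A B : Matrix (Fin m) (Fin m) ℝ) : ip A B = ∑ i, ∑ j, A i j * B j i := by
  simp [ip, Matrix.trace, Matrix.mul_apply, Matrix.diag]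

lemma quadEq (M : Matrix (Fin m) (Fin m) ℝ) (x : Fin m → ℝ) :
    x ⬝ᵥ M.mulVec x = ∑ i, ∑ j, x i * M i j * x j := by
  simp [dotProduct, Matrix.mulVec, Finset.mul_sum, mul_assoc]

lemma qf_nonneg {M : Matrix (Fin m) (Fin m) ℝ} (h : M.PosSemidef) (x : Fin m → ℝ) :
    0 ≤ qf M x := by simpa [qf] using h.dotProduct_mulVec_nonneg x

open scoped MatrixOrder in
lemma psd_eq_ct {N : Matrix (Fin m) (Fin m) ℝ} (hN : N.PosSemidef) :
    ∃ B : Matrix (Fin m) (Fin m) ℝ, N = Bᴴ * B := by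
  obtain ⟨B, hB⟩ := CStarAlgebra.nonneg_iff_eq_star_mul_self.mp hN.nonneg
  exact ⟨B, hB⟩

lemma symm_herm {P : Matrix (Fin m) (Fin m) ℝ} (h : P.IsSymm) : P.IsHermitian := by
  rwa [Matrix.IsHermitian, conjTranspose_eq_transpose_of_trivial]

lemma herm_symm {P : Matrix (Fin m) (Fin m) ℝ} (h : P.IsHermitian) : P.IsSymm := by
  rwa [Matrix.IsHermitian, conjTranspose_eq_transpose_of_trivial] at h

lemma ip_psd (M : Matrix (Fin m) (Fin m) ℝ) (B : Matrix (Fin m) (Fin m) ℝ) :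
    ip M (Bᴴ * B) = ∑ l, qf M (fun c => B l c) := by
  have h1 : ip M (Bᴴ * B) = ((B * M) * Bᴴ).trace := by
    rw [ip, ← Matrix.mul_assoc, Matrix.trace_mul_comm, Matrix.mul_assoc]
  rw [h1]
  simp only [Matrix.trace, Matrix.diag, Matrix.mul_apply, qf, dotProduct, Matrix.mulVec,
    conjTranspose_apply, star_trivial, Finset.sum_mul, Finset.mul_sum]
  refine Finset.sum_congr rfl fun l _ => ?_
  rw [Finset.sum_comm]
  refine Finset.sum_congr rfl fun i _ => Finset.sum_congr rfl fun j _ => by ring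

lemma ip_psd_nonneg {M N : Matrix (Fin m) (Fin m) ℝ} (hM : M.PosSemidef) (hN : N.PosSemidef) :
    0 ≤ ip M N := by
  obtain ⟨B, rfl⟩ := psd_eq_ct hN
  rw [ip_psd]
  exact Finset.sum_nonneg fun l _ => qf_nonneg hM _

lemma ip_pd_zero {M N : Matrix (Fin m) (Fin m) ℝ} (hM : M.PosDef) (hN : N.PosSemidef)
    (h : ip M N = 0) : N = 0 := by
  obtain ⟨B, rfl⟩ := psd_eq_ct hN
  rw [ip_psd] at h
  have hB : ∀ l, (fun c => B l c) = (0 : Fin m → ℝ) := by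
    intro l
    by_contra hne
    have hpos : 0 < qf M (fun c => B l c) := by
      simpa [qf] using hM.dotProduct_mulVec_pos hne
    have hall : ∀ l ∈ Finset.univ, 0 ≤ qf M (fun c => B l c) :=
      fun l _ => qf_nonneg hM.posSemidef _
    have := (Finset.sum_eq_zero_iff_of_nonneg hall).mp h l (Finset.mem_univ l)
    linarith
  have : B = 0 := by ext l c; exact congrFun (hB l) c
  simp [this]

lemma entry_sq_le {X : Matrix (Fin m) (Fin m) ℝ} (hX : X.PosSemidef) (i j : Fin m) :
    X i j ^ 2 ≤ X i i * X j j := by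
  have hsym : X j i = X i j := by
    calc X j i = Xᴴ i j := by simp [conjTranspose_apply]
    _ = X i j := by rw [hX.1]
  have hq : ∀ y : Fin m → ℝ, 0 ≤ y ⬝ᵥ X.mulVec y := fun y => by simpa [qf] using qf_nonneg hX y
  by_cases hij : i = j
  · subst hij
    nlinarith [hq (Pi.single i 1), quadEq X (Pi.single i 1),
      (by simp [quadEq, Pi.single_apply] : (Pi.single i (1:ℝ)) ⬝ᵥ X.mulVec (Pi.single i 1) = X i i)]
  · have key : ∀ t : ℝ, 0 ≤ X i i * (t*t) + (2 * X i j) * t + X j j := by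
      intro t
      set v : Fin m → ℝ := fun a => (if a = i then t else 0) + (if a = j then 1 else 0) with hv
      have h := hq v
      rw [quadEq] at h
      have hexp : ∑ a, ∑ b, v a * X a b * v b = X i i * (t*t) + (2 * X i j) * t + X j j := by
        simp only [hv, add_mul, mul_add, ite_mul, mul_ite, zero_mul, mul_zero,
          Finset.sum_add_distrib, Finset.sum_ite_eq', Finset.mem_univ, if_true,
          zero_add, add_zero, one_mul, mul_one]
        ring_nf
        rw [hsym]
        ring
      rw [hexp] at h; exact h
    have := discrim_le_zero key
    simp only [discrim] at this
    nlinarith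

lemma psd_diag_nonneg {X : Matrix (Fin m) (Fin m) ℝ} (hX : X.PosSemidef) (i : Fin m) :
    0 ≤ X i i := by
  have h := qf_nonneg hX (Pi.single i 1)
  have : qf X (Pi.single i (1:ℝ)) = X i i := by
    simp [qf, quadEq, Pi.single_apply]
  linarith [this ▸ h]

lemma vecMulVec_quad (q x : Fin m → ℝ) : 0 ≤ x ⬝ᵥ (vecMulVec q q).mulVec x := by
  have h1 : (vecMulVec q q).mulVec x = fun i => q i * (q ⬝ᵥ x) := by
    funext i
    simp [Matrix.mulVec, vecMulVec_apply, dotProduct, Finset.mul_sum, mul_assoc]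
  rw [h1]
  have h2 : x ⬝ᵥ (fun i => q i * (q ⬝ᵥ x)) = (x ⬝ᵥ q) * (q ⬝ᵥ x) := by
    simp only [dotProduct, Finset.sum_mul]
    exact Finset.sum_congr rfl fun i _ => by ring
  rw [h2, dotProduct_comm]
  exact mul_self_nonneg _

lemma vecMulVec_symm (q : Fin m → ℝ) : (vecMulVec q q).IsSymm := by
  rw [Matrix.IsSymm]
  ext i j
  simp [Matrix.transpose_apply, vecMulVec_apply, mul_comm]

lemma vecMulVec_psd (q : Fin m → ℝ) : (vecMulVec q q).PosSemidef :=
  PosSemidef.of_dotProduct_mulVec_nonneg (symm_herm (vecMulVec_symm q)) fun x => by simpa [star_trivial] using vecMulVec_quad q x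

lemma ip_vecMulVec (M : Matrix (Fin m) (Fin m) ℝ) (q : Fin m → ℝ) :
    ip M (vecMulVec q q) = qf M q := by
  rw [ipEq, qf, quadEq]
  refine Finset.sum_congr rfl fun i _ => Finset.sum_congr rfl fun j _ => ?_
  rw [vecMulVec_apply]; ring

lemma quad_pert (D : Matrix (Fin m) (Fin m) ℝ) (ε : ℝ) (hD : ∀ i j, |D i j| ≤ ε)
    (x : Fin m → ℝ) : |x ⬝ᵥ D.mulVec x| ≤ ε * m * ∑ i, x i * x i := by
  have hq : x ⬝ᵥ D.mulVec x = ∑ i, ∑ j, x i * D i j * x j := by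
    simp [dotProduct, Matrix.mulVec, Finset.mul_sum, mul_assoc]
  rw [hq]
  set T := ∑ i, x i * x i with hT
  calc |∑ i, ∑ j, x i * D i j * x j| ≤ ∑ i, |∑ j, x i * D i j * x j| :=
        Finset.abs_sum_le_sum_abs _ _
    _ ≤ ∑ i, ∑ j, |x i * D i j * x j| :=
        Finset.sum_le_sum fun i _ => Finset.abs_sum_le_sum_abs _ _
    _ ≤ ∑ i, ∑ j, ε * ((x i * x i + x j * x j)/2) := by
        refine Finset.sum_le_sum fun i _ => Finset.sum_le_sum fun j _ => ?_
        have h1 := hD i j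
        have h2 : (0:ℝ) ≤ ε := le_trans (abs_nonneg _) h1
        have h3 : |x i * D i j * x j| = |x i| * |D i j| * |x j| := by
          rw [abs_mul, abs_mul]
        rw [h3]
        nlinarith [abs_nonneg (x i), abs_nonneg (x j), sq_abs (x i), sq_abs (x j),
          sq_nonneg (|x i| - |x j|), mul_le_mul_of_nonneg_left h1 (abs_nonneg (x i)),
          mul_nonneg (abs_nonneg (x i)) (abs_nonneg (x j))]
    _ = ε * m * T := by
        have hrow : ∀ i : Fin m, ∑ j, ε * ((x i * x i + x j * x j)/2)
            = ε * ((m:ℝ) * (x i * x i) + T)/2 := by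
          intro i
          simp only [← mul_div_assoc]
          rw [← Finset.sum_div, ← Finset.mul_sum, Finset.sum_add_distrib,
            Finset.sum_const, Finset.card_univ, Fintype.card_fin, nsmul_eq_mul, ← hT]
        rw [Finset.sum_congr rfl fun i _ => hrow i]
        rw [← Finset.sum_div, ← Finset.mul_sum, Finset.sum_add_distrib,
          Finset.sum_const, Finset.card_univ, Fintype.card_fin, nsmul_eq_mul,
          ← Finset.mul_sum, ← hT]
        ring

lemma lim1' {F w c : ℝ} (h : ∀ δ : ℝ, 0 < δ → F + δ * w ≤ c) : F ≤ c := by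
  by_contra hc
  push_neg at hc
  have h1 := h ((F - c) / (2 * (|w| + 1))) (div_pos (by linarith) (by positivity))
  have h2 : |(F - c) / (2 * (|w| + 1)) * w| ≤ (F - c) / 2 := by
    rw [abs_mul, abs_div, abs_of_pos (by positivity : (0:ℝ) < 2 * (|w|+1))]
    rw [abs_of_pos (by linarith : (0:ℝ) < F - c), div_mul_eq_mul_div,
      div_le_div_iff₀ (by positivity) (by norm_num)]
    nlinarith [abs_nonneg w]
  have h3 : -( (F - c)/2 ) ≤ (F - c) / (2 * (|w| + 1)) * w := by
    have := neg_abs_le ((F - c) / (2 * (|w| + 1)) * w); linarith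
  linarith

lemma lim2 {a w c : ℝ} (h : ∀ t : ℝ, 0 < t → a + t * w ≤ c) : w ≤ 0 := by
  by_contra hc
  push_neg at hc
  have ht : (0:ℝ) < max 1 ((c - a) / w + 1) := lt_of_lt_of_le one_pos (le_max_left _ _)
  have h1 := h _ ht
  have h3 : ((c - a) / w + 1) * w ≤ max 1 ((c - a) / w + 1) * w :=
    mul_le_mul_of_nonneg_right (le_max_right _ _) hc.le
  rw [add_mul, div_mul_cancel₀ _ (ne_of_gt hc), one_mul] at h3
  linarith

end Helpers

section Core
variable {m : ℕ} {K : Type} [Fintype K]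

set_option maxHeartbeats 1000000 in
lemma sdp_strong_duality
    (C : Matrix (Fin m) (Fin m) ℝ) (hC : C.IsSymm)
    (A : K → Matrix (Fin m) (Fin m) ℝ) (hA : ∀ k, (A k).IsSymm)
    (b : K → ℝ) (d : ℝ)
    (αhat : K → ℝ) (hαhat : ∀ k, 0 ≤ αhat k)
    (hslater : (C + ∑ k, αhat k • A k).PosDef)
    (hd : ∀ α : K → ℝ, (∀ k, 0 ≤ α k) → (C + ∑ k, α k • A k).PosSemidef →
        ∑ k, -(b k) * α k ≤ d)
    (ε : ℝ) (hε : 0 < ε) :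
    ∃ X : Matrix (Fin m) (Fin m) ℝ, X.IsSymm ∧ X.PosSemidef ∧
      (∀ k, ip (A k) X ≤ b k) ∧ ip C X ≤ d + ε := by
  classical
  set Sm : (K → ℝ) → Matrix (Fin m) (Fin m) ℝ := fun α => ∑ k, α k • A k with hSm
  have hsq : ∀ x : Fin m → ℝ, 0 ≤ ∑ i, x i * x i :=
    fun x => Finset.sum_nonneg fun i _ => mul_self_nonneg _
  have hSmlin : ∀ (a b' : ℝ) (α₁ α₂ : K → ℝ),
      Sm (fun k => a * α₁ k + b' * α₂ k) = a • Sm α₁ + b' • Sm α₂ := by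
    intro a b' α₁ α₂
    simp only [hSm, add_smul, Finset.sum_add_distrib, Finset.smul_sum, smul_smul]
  have hSmsymm : ∀ α : K → ℝ, (Sm α).IsSymm := by
    intro α
    rw [Matrix.IsSymm, hSm, Matrix.transpose_sum]
    exact Finset.sum_congr rfl fun k _ => by rw [Matrix.transpose_smul, hA k]
  -- the open convex set
  set U : Set (Matrix (Fin m) (Fin m) ℝ × ℝ) :=
    {p | ∃ α : K → ℝ, (∀ k, 0 ≤ α k) ∧ ∃ c : ℝ, 0 < c ∧
      (∀ x : Fin m → ℝ, c * ∑ i, x i * x i ≤ x ⬝ᵥ ((p.1 + C + Sm α).mulVec x)) ∧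
      (∑ k, b k * α k) + c < p.2} with hU
  -- openness
  have hUopen : IsOpen U := by
    rw [isOpen_iff_mem_nhds]
    rintro p₀ ⟨α, hα, c, hc, hquad, hr⟩
    set ε' : ℝ := c / (2 * (m + 1)) with hε'
    have hε'pos : 0 < ε' := by positivity
    set N : Set (Matrix (Fin m) (Fin m) ℝ × ℝ) :=
      (⋂ i, ⋂ j, {p : Matrix (Fin m) (Fin m) ℝ × ℝ | |p.1 i j - p₀.1 i j| < ε'}) ∩
        {p : Matrix (Fin m) (Fin m) ℝ × ℝ | |p.2 - p₀.2| < c / 2} with hN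
    have hNopen : IsOpen N := by
      refine IsOpen.inter (isOpen_iInter_of_finite fun i => isOpen_iInter_of_finite fun j => ?_)
        (isOpen_lt ((continuous_snd.sub continuous_const).abs) continuous_const)
      exact isOpen_lt (by fun_prop) continuous_const
    have hp₀N : p₀ ∈ N := by
      constructor
      · simp only [Set.mem_iInter, Set.mem_setOf_eq]
        intro i j; simpa using hε'pos
      · simp only [Set.mem_setOf_eq]; simpa using by positivity
    refine mem_nhds_iff.mpr ⟨N, ?_, hNopen, hp₀N⟩
    rintro p ⟨hp1, hp2⟩
    simp only [Set.mem_iInter, Set.mem_setOf_eq] at hp1 hp2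
    refine ⟨α, hα, c / 2, by positivity, ?_, ?_⟩
    · intro x
      have hid : p.1 + C + Sm α = (p₀.1 + C + Sm α) + (p.1 - p₀.1) := by abel
      have hpert := quad_pert (p.1 - p₀.1) ε' (fun i j => (hp1 i j).le) x
      have hεm : ε' * m ≤ c / 2 := by
        rw [hε', div_mul_eq_mul_div, div_le_div_iff₀ (by positivity) (by norm_num)]
        nlinarith [hc.le, Nat.cast_nonneg (α := ℝ) m]
      have h1 := hquad x
      have h2 : x ⬝ᵥ ((p.1 + C + Sm α).mulVec x)
          = x ⬝ᵥ ((p₀.1 + C + Sm α).mulVec x) + x ⬝ᵥ ((p.1 - p₀.1).mulVec x) := by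
        rw [hid, Matrix.add_mulVec, dotProduct_add]
      have h3 : -(ε' * m * ∑ i, x i * x i) ≤ x ⬝ᵥ ((p.1 - p₀.1).mulVec x) := by
        have := neg_abs_le (x ⬝ᵥ ((p.1 - p₀.1).mulVec x)); linarith
      have h4 : ε' * m * ∑ i, x i * x i ≤ (c/2) * ∑ i, x i * x i :=
        mul_le_mul_of_nonneg_right hεm (hsq x)
      linarith
    · have := hp2; have := hr
      have : p₀.2 - c/2 < p.2 := by
        have := abs_lt.mp hp2; linarith [this.1]
      linarith
  -- convexity
  have hUconv : Convex ℝ U := by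
    rintro p ⟨α₁, hα₁, c₁, hc₁, hq₁, hr₁⟩ q ⟨α₂, hα₂, c₂, hc₂, hq₂, hr₂⟩ a b' ha hb' hab
    have hpos : 0 < a ∨ 0 < b' := by
      by_contra hcon
      push_neg at hcon
      have : a = 0 := le_antisymm hcon.1 ha
      have : b' = 0 := le_antisymm hcon.2 hb'
      simp_all
    refine ⟨fun k => a * α₁ k + b' * α₂ k,
      fun k => add_nonneg (mul_nonneg ha (hα₁ k)) (mul_nonneg hb' (hα₂ k)),
      a * c₁ + b' * c₂, ?_, ?_, ?_⟩
    · rcases hpos with h | h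
      · have : 0 < a * c₁ := mul_pos h hc₁
        nlinarith [mul_nonneg hb' hc₂.le]
      · have : 0 < b' * c₂ := mul_pos h hc₂
        nlinarith [mul_nonneg ha hc₁.le]
    · intro x
      have hid : (a • p + b' • q).1 + C + Sm (fun k => a * α₁ k + b' * α₂ k)
          = a • (p.1 + C + Sm α₁) + b' • (q.1 + C + Sm α₂) := by
        rw [hSmlin]
        have hCsplit : (C : Matrix (Fin m) (Fin m) ℝ) = a • C + b' • C := by
          rw [← add_smul, hab, one_smul]
        simp only [Prod.fst_add, Prod.smul_fst, smul_add]
        nth_rewrite 1 [hCsplit]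
        abel
      rw [hid, Matrix.add_mulVec, dotProduct_add]
      have e1 : x ⬝ᵥ ((a • (p.1 + C + Sm α₁)).mulVec x)
          = a * (x ⬝ᵥ ((p.1 + C + Sm α₁).mulVec x)) := by
        rw [Matrix.smul_mulVec, dotProduct_smul, smul_eq_mul]
      have e2 : x ⬝ᵥ ((b' • (q.1 + C + Sm α₂)).mulVec x)
          = b' * (x ⬝ᵥ ((q.1 + C + Sm α₂).mulVec x)) := by
        rw [Matrix.smul_mulVec, dotProduct_smul, smul_eq_mul]
      rw [e1, e2]
      have i1 : a * (c₁ * ∑ i, x i * x i) ≤ a * (x ⬝ᵥ ((p.1 + C + Sm α₁).mulVec x)) :=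
        mul_le_mul_of_nonneg_left (hq₁ x) ha
      have i2 : b' * (c₂ * ∑ i, x i * x i) ≤ b' * (x ⬝ᵥ ((q.1 + C + Sm α₂).mulVec x)) :=
        mul_le_mul_of_nonneg_left (hq₂ x) hb'
      nlinarith [hsq x]
    · have hsum : ∑ k, b k * (a * α₁ k + b' * α₂ k)
          = a * ∑ k, b k * α₁ k + b' * ∑ k, b k * α₂ k := by
        rw [Finset.mul_sum, Finset.mul_sum, ← Finset.sum_add_distrib]
        exact Finset.sum_congr rfl fun k _ => by ring
      have hsnd : (a • p + b' • q).2 = a * p.2 + b' * q.2 := by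
        simp [Prod.snd_add, Prod.smul_snd, smul_eq_mul]
      rw [hsum, hsnd]
      rcases hpos with h | h
      · have s1 : a * (∑ k, b k * α₁ k + c₁) < a * p.2 := mul_lt_mul_of_pos_left hr₁ h
        have s2 : b' * (∑ k, b k * α₂ k + c₂) ≤ b' * q.2 := mul_le_mul_of_nonneg_left hr₂.le hb'
        nlinarith
      · have s1 : a * (∑ k, b k * α₁ k + c₁) ≤ a * p.2 := mul_le_mul_of_nonneg_left hr₁.le ha
        have s2 : b' * (∑ k, b k * α₂ k + c₂) < b' * q.2 := mul_lt_mul_of_pos_left hr₂ h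
        nlinarith
  -- the point to separate
  set p₀ : Matrix (Fin m) (Fin m) ℝ × ℝ := (0, -(d + ε)) with hp₀
  have hp₀notin : p₀ ∉ U := by
    rintro ⟨α, hα, c, hc, hquad, hr⟩
    have hpsd : (C + Sm α).PosSemidef := by
      refine PosSemidef.of_dotProduct_mulVec_nonneg (symm_herm (Matrix.IsSymm.add hC (hSmsymm α))) fun x => ?_
      have := hquad x
      simp only [hp₀, zero_add] at this
      have h0 : (0:ℝ) ≤ c * ∑ i, x i * x i := mul_nonneg hc.le (hsq x)
      simpa [star_trivial] using le_trans h0 this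
    have hda := hd α hα hpsd
    have hsumneg : ∑ k, -(b k) * α k = -∑ k, b k * α k := by
      rw [← Finset.sum_neg_distrib]
      exact Finset.sum_congr rfl fun k _ => by ring
    rw [hsumneg] at hda
    simp only [hp₀] at hr
    linarith
  -- separation
  obtain ⟨f, hf⟩ := geometric_hahn_banach_open_point hUconv hUopen hp₀notin
  set G : Matrix (Fin m) (Fin m) ℝ →ₗ[ℝ] ℝ :=
    (f.toLinearMap).comp (LinearMap.inl ℝ (Matrix (Fin m) (Fin m) ℝ) ℝ) with hG
  set μ : ℝ := f (0, 1) with hμ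
  have hfPr : ∀ (P : Matrix (Fin m) (Fin m) ℝ) (r : ℝ), f (P, r) = G P + r * μ := by
    intro P r
    have : (P, r) = (P, (0:ℝ)) + r • ((0 : Matrix (Fin m) (Fin m) ℝ), (1:ℝ)) := by
      simp [Prod.ext_iff]
    rw [this, map_add, f.map_smul]
    simp [hG, hμ, smul_eq_mul]
  set c₀ : ℝ := -(d + ε) * μ with hc₀
  have hfp₀ : f p₀ = c₀ := by
    rw [hp₀, hfPr, map_zero, zero_add, hc₀]
  -- KEY1: raw inequality from membership
  have KEY1 : ∀ (α : K → ℝ), (∀ k, 0 ≤ α k) → ∀ Q : Matrix (Fin m) (Fin m) ℝ,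
      (∀ x : Fin m → ℝ, 0 ≤ x ⬝ᵥ Q.mulVec x) → ∀ δ δ' : ℝ, 0 < δ → 0 < δ' →
      G Q + δ * G 1 - G C - G (Sm α) + (∑ k, b k * α k) * μ + δ' * μ < c₀ := by
    intro α hα Q hQ δ δ' hδ hδ'
    have hmem : ((Q + δ • (1 : Matrix (Fin m) (Fin m) ℝ) - C - Sm α,
        (∑ k, b k * α k) + δ') : Matrix (Fin m) (Fin m) ℝ × ℝ) ∈ U := by
      refine ⟨α, hα, min δ (δ'/2), lt_min hδ (by linarith), ?_, ?_⟩
      · intro x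
        have hid : (Q + δ • (1 : Matrix (Fin m) (Fin m) ℝ) - C - Sm α) + C + Sm α
            = Q + δ • (1 : Matrix (Fin m) (Fin m) ℝ) := by abel
        rw [hid, Matrix.add_mulVec, dotProduct_add, Matrix.smul_mulVec,
          dotProduct_smul, smul_eq_mul, Matrix.one_mulVec]
        have h1 : x ⬝ᵥ x = ∑ i, x i * x i := rfl
        rw [h1]
        have h2 : min δ (δ'/2) * ∑ i, x i * x i ≤ δ * ∑ i, x i * x i :=
          mul_le_mul_of_nonneg_right (min_le_left _ _) (hsq x)
        linarith [hQ x]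
      · have : min δ (δ'/2) ≤ δ'/2 := min_le_right _ _
        simp only []
        linarith
    have := hf _ hmem
    rw [hfp₀] at this
    rw [hfPr] at this
    have hexp : G (Q + δ • (1 : Matrix (Fin m) (Fin m) ℝ) - C - Sm α)
        = G Q + δ * G 1 - G C - G (Sm α) := by
      rw [map_sub, map_sub, map_add, G.map_smul, smul_eq_mul]
    rw [hexp] at this
    linarith
  -- KEY2
  have KEY2 : ∀ (α : K → ℝ), (∀ k, 0 ≤ α k) → ∀ Q : Matrix (Fin m) (Fin m) ℝ,
      (∀ x : Fin m → ℝ, 0 ≤ x ⬝ᵥ Q.mulVec x) →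
      G Q - G C - G (Sm α) + (∑ k, b k * α k) * μ ≤ c₀ := by
    intro α hα Q hQ
    apply lim1' (w := G 1 + μ)
    intro δ hδ
    have := KEY1 α hα Q hQ δ δ hδ hδ
    linarith [this]
  have hQ0 : ∀ x : Fin m → ℝ, 0 ≤ x ⬝ᵥ (0 : Matrix (Fin m) (Fin m) ℝ).mulVec x := by
    intro x; simp
  have hSm0 : Sm 0 = 0 := by simp [hSm]
  -- μ ≤ 0
  have hμle : μ ≤ 0 := by
    apply lim2 (a := G 0 + 1 * G 1 - G C - G (Sm 0) + (∑ k, b k * (0:K → ℝ) k) * μ) (c := c₀)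
    intro t ht
    have := KEY1 0 (fun k => le_refl 0) 0 hQ0 1 t one_pos ht
    linarith
  -- expansion of G on Sm
  have hGSm : ∀ α : K → ℝ, G (Sm α) = ∑ k, α k * G (A k) := by
    intro α
    rw [hSm]
    simp only [map_sum, G.map_smul, smul_eq_mul]
  -- f2 : G nonpositive on quadPSD matrices
  have f2 : ∀ Q : Matrix (Fin m) (Fin m) ℝ, (∀ x : Fin m → ℝ, 0 ≤ x ⬝ᵥ Q.mulVec x) →
      G Q ≤ 0 := by
    intro Q₀ hQ₀
    apply lim2 (a := - G C) (c := c₀)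
    intro t ht
    have hQt : ∀ x : Fin m → ℝ, 0 ≤ x ⬝ᵥ (t • Q₀).mulVec x := by
      intro x
      rw [Matrix.smul_mulVec, dotProduct_smul, smul_eq_mul]
      exact mul_nonneg ht.le (hQ₀ x)
    have := KEY2 0 (fun k => le_refl 0) (t • Q₀) hQt
    rw [hSm0, map_zero, G.map_smul, smul_eq_mul] at this
    simp only [Pi.zero_apply, mul_zero, Finset.sum_const_zero, zero_mul, add_zero, sub_zero] at this
    linarith
  -- f4
  have f4 : - G C ≤ c₀ := by
    have := KEY2 0 (fun k => le_refl 0) 0 hQ0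
    rw [hSm0, map_zero] at this
    simp only [Pi.zero_apply, mul_zero, Finset.sum_const_zero, zero_mul, add_zero, sub_zero,
      zero_sub] at this
    linarith
  -- f3
  have f3 : ∀ k : K, b k * μ - G (A k) ≤ 0 := by
    intro k
    apply lim2 (a := - G C) (c := c₀)
    intro t ht
    set α : K → ℝ := fun k' => if k' = k then t else 0 with hαdef
    have hα : ∀ k', 0 ≤ α k' := by
      intro k'; rw [hαdef]; dsimp only; split <;> simp [ht.le]
    have hSmα : Sm α = t • A k := by
      rw [hSm]
      simp only [hαdef, ite_smul, zero_smul]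
      rw [Finset.sum_ite_eq' Finset.univ k (fun k' => t • A k')]
      simp
    have hbα : ∑ k', b k' * α k' = b k * t := by
      simp only [hαdef, mul_ite, mul_zero]
      rw [Finset.sum_ite_eq' Finset.univ k (fun k' => b k' * t)]
      simp
    have := KEY2 α hα 0 hQ0
    rw [hSmα, hbα, map_zero, G.map_smul, smul_eq_mul] at this
    have heq : (0:ℝ) - G C - t * G (A k) + b k * t * μ = - G C + t * (b k * μ - G (A k)) := by
      ring
    rw [zero_sub] at this
    nlinarith [this]
  -- the representing matrix Z
  set Z : Matrix (Fin m) (Fin m) ℝ :=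
    Matrix.of (fun i j => G (Matrix.single i j 1)) with hZ
  have hGZ : ∀ P : Matrix (Fin m) (Fin m) ℝ, G P = ∑ i, ∑ j, P i j * Z i j := by
    intro P
    conv_lhs => rw [matrix_eq_sum_single P]
    rw [map_sum]
    refine Finset.sum_congr rfl fun i _ => ?_
    rw [map_sum]
    refine Finset.sum_congr rfl fun j _ => ?_
    rw [show Matrix.single i j (P i j) = (P i j) • Matrix.single i j (1:ℝ) by
      rw [smul_single, smul_eq_mul, mul_one]]
    rw [G.map_smul, smul_eq_mul, hZ]
    rfl
  -- quadratic form of Z is nonpositive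
  have hvmv : ∀ q x : Fin m → ℝ, 0 ≤ x ⬝ᵥ (vecMulVec q q).mulVec x := by
    intro q x
    have h1 : (vecMulVec q q).mulVec x = fun i => q i * (q ⬝ᵥ x) := by
      funext i
      simp [Matrix.mulVec, vecMulVec_apply, dotProduct, Finset.mul_sum, mul_assoc]
    rw [h1]
    have h2 : x ⬝ᵥ (fun i => q i * (q ⬝ᵥ x)) = (x ⬝ᵥ q) * (q ⬝ᵥ x) := by
      simp only [dotProduct, Finset.sum_mul]
      exact Finset.sum_congr rfl fun i _ => by ring
    rw [h2, dotProduct_comm]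
    exact mul_self_nonneg _
  have hZq : ∀ q : Fin m → ℝ, ∑ i, ∑ j, q i * Z i j * q j ≤ 0 := by
    intro q
    have := f2 (vecMulVec q q) (hvmv q)
    rw [hGZ] at this
    calc ∑ i, ∑ j, q i * Z i j * q j
        = ∑ i, ∑ j, vecMulVec q q i j * Z i j := by
          refine Finset.sum_congr rfl fun i _ => Finset.sum_congr rfl fun j _ => ?_
          rw [vecMulVec_apply]; ring
      _ ≤ 0 := this
  -- symmetrized pairing
  have hpairT : ∀ P : Matrix (Fin m) (Fin m) ℝ, P.IsSymm →
      ∑ i, ∑ j, P i j * Z j i = ∑ i, ∑ j, P i j * Z i j := by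
    intro P hP
    rw [Finset.sum_comm]
    exact Finset.sum_congr rfl fun i _ => Finset.sum_congr rfl fun j _ => by rw [hP.apply]
  set Zs : Matrix (Fin m) (Fin m) ℝ := Matrix.of (fun i j => 2⁻¹ * (Z i j + Z j i)) with hZs
  have hZs_symm : Zs.IsSymm := by
    rw [Matrix.IsSymm]
    ext i j
    simp only [Matrix.transpose_apply, hZs, Matrix.of_apply]
    ring
  have hGsymmPair : ∀ P : Matrix (Fin m) (Fin m) ℝ, P.IsSymm →
      G P = ∑ i, ∑ j, P i j * Zs i j := by
    intro P hP
    calc G P = ∑ i, ∑ j, P i j * Z i j := hGZ P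
      _ = 2⁻¹ * ((∑ i, ∑ j, P i j * Z i j) + (∑ i, ∑ j, P i j * Z j i)) := by
          rw [hpairT P hP]; ring
      _ = ∑ i, ∑ j, P i j * Zs i j := by
          rw [← Finset.sum_add_distrib, Finset.mul_sum]
          refine Finset.sum_congr rfl fun i _ => ?_
          rw [← Finset.sum_add_distrib, Finset.mul_sum]
          refine Finset.sum_congr rfl fun j _ => ?_
          simp only [hZs, Matrix.of_apply]
          ring
  have hZs_quad : ∀ x : Fin m → ℝ, x ⬝ᵥ Zs.mulVec x = ∑ i, ∑ j, x i * Z i j * x j := by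
    intro x
    rw [quadEq]
    have hswap : ∑ i, ∑ j, x i * Z j i * x j = ∑ i, ∑ j, x i * Z i j * x j := by
      rw [Finset.sum_comm]
      exact Finset.sum_congr rfl fun i _ => Finset.sum_congr rfl fun j _ => by ring
    calc ∑ i, ∑ j, x i * Zs i j * x j
        = 2⁻¹ * ((∑ i, ∑ j, x i * Z i j * x j) + (∑ i, ∑ j, x i * Z j i * x j)) := by
          rw [← Finset.sum_add_distrib, Finset.mul_sum]
          refine Finset.sum_congr rfl fun i _ => ?_
          rw [← Finset.sum_add_distrib, Finset.mul_sum]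
          refine Finset.sum_congr rfl fun j _ => ?_
          simp only [hZs, Matrix.of_apply]
          ring
      _ = ∑ i, ∑ j, x i * Z i j * x j := by rw [hswap]; ring
  -- case analysis on μ
  rcases hμle.lt_or_eq with hμneg | hμ0
  · -- μ < 0 : construct the primal solution
    have hμne : μ ≠ 0 := ne_of_lt hμneg
    have hμinv : μ⁻¹ < 0 := inv_lt_zero.mpr hμneg
    set X : Matrix (Fin m) (Fin m) ℝ := μ⁻¹ • Zs with hX
    have hXsymm : X.IsSymm := hZs_symm.smul μ⁻¹
    have hXquad : ∀ x : Fin m → ℝ, 0 ≤ x ⬝ᵥ X.mulVec x := by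
      intro x
      rw [hX, Matrix.smul_mulVec, dotProduct_smul, smul_eq_mul, hZs_quad]
      have h := mul_nonneg (neg_nonneg.mpr hμinv.le) (neg_nonneg.mpr (hZq x))
      rw [neg_mul_neg] at h
      exact h
    have hXpsd : X.PosSemidef :=
      PosSemidef.of_dotProduct_mulVec_nonneg (symm_herm hXsymm) fun x => by simpa [star_trivial] using hXquad x
    have hipX : ∀ P : Matrix (Fin m) (Fin m) ℝ, P.IsSymm → ip P X = μ⁻¹ * G P := by
      intro P hP
      rw [ipEq, hGsymmPair P hP, Finset.mul_sum]
      refine Finset.sum_congr rfl fun i _ => ?_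
      rw [Finset.mul_sum]
      refine Finset.sum_congr rfl fun j _ => ?_
      have hXji : X j i = X i j := hXsymm.apply i j
      rw [hXji, hX, Matrix.smul_apply, smul_eq_mul]
      ring
    refine ⟨X, hXsymm, hXpsd, fun k => ?_, ?_⟩
    · rw [hipX (A k) (hA k)]
      have h1 : b k * μ ≤ G (A k) := by linarith [f3 k]
      have h2 : μ⁻¹ * G (A k) ≤ μ⁻¹ * (b k * μ) := mul_le_mul_of_nonpos_left h1 hμinv.le
      have h3 : μ⁻¹ * (b k * μ) = b k := by
        rw [mul_comm (b k) μ, ← mul_assoc, inv_mul_cancel₀ hμne, one_mul]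
      exact h3 ▸ h2
    · rw [hipX C hC]
      have h1 : (d + ε) * μ ≤ G C := by
        rw [hc₀] at f4; linarith
      have h2 : μ⁻¹ * G C ≤ μ⁻¹ * ((d + ε) * μ) := mul_le_mul_of_nonpos_left h1 hμinv.le
      have h3 : μ⁻¹ * ((d + ε) * μ) = d + ε := by
        rw [mul_comm (d + ε) μ, ← mul_assoc, inv_mul_cancel₀ hμne, one_mul]
      exact h3 ▸ h2
  · -- μ = 0 : contradiction via the Slater point
    exfalso
    have hc₀0 : c₀ = 0 := by rw [hc₀, hμ0, mul_zero]
    set Mhat : Matrix (Fin m) (Fin m) ℝ := C + Sm αhat with hMhat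
    have hMhat_pd : Mhat.PosDef := by
      rw [hMhat, hSm]; exact hslater
    have hMhat_symm : Mhat.IsSymm := hC.add (hSmsymm αhat)
    have hMhatquad : ∀ x : Fin m → ℝ, 0 ≤ x ⬝ᵥ Mhat.mulVec x := by
      intro x
      simpa [star_trivial] using hMhat_pd.posSemidef.dotProduct_mulVec_nonneg x
    have step1 : G Mhat ≤ 0 := f2 Mhat hMhatquad
    have step2 : 0 ≤ G Mhat := by
      have := KEY2 αhat hαhat 0 hQ0
      rw [map_zero, hμ0, hc₀0] at this
      have hGMhat : G Mhat = G C + G (Sm αhat) := by rw [hMhat, map_add]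
      simp only [mul_zero, add_zero, zero_sub] at this
      linarith
    have hGM : G Mhat = 0 := le_antisymm step1 step2
    -- Zs = 0
    have hNsymm : (-Zs).IsSymm := hZs_symm.neg
    have hNpsd : (-Zs).PosSemidef := by
      refine PosSemidef.of_dotProduct_mulVec_nonneg (symm_herm hNsymm) fun x => ?_
      have : x ⬝ᵥ (-Zs).mulVec x = -(x ⬝ᵥ Zs.mulVec x) := by
        rw [Matrix.neg_mulVec, dotProduct_neg]
      rw [star_trivial, this, hZs_quad]
      linarith [hZq x]
    have hipMZs : ip Mhat Zs = 0 := by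
      rw [ipEq]
      have : ∑ i, ∑ j, Mhat i j * Zs j i = ∑ i, ∑ j, Mhat i j * Zs i j := by
        refine Finset.sum_congr rfl fun i _ => Finset.sum_congr rfl fun j _ => ?_
        rw [hZs_symm.apply]
      rw [this, ← hGsymmPair Mhat hMhat_symm, hGM]
    have hipMN : ip Mhat (-Zs) = 0 := by
      rw [ipEq] at hipMZs ⊢
      rw [← neg_eq_zero, ← hipMZs, ← Finset.sum_neg_distrib]
      refine Finset.sum_congr rfl fun i _ => ?_
      rw [← Finset.sum_neg_distrib]
      refine Finset.sum_congr rfl fun j _ => ?_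
      simp
    have hZs0 : Zs = 0 := by
      have := ip_pd_zero hMhat_pd hNpsd hipMN
      simpa [neg_eq_zero] using this
    -- contradiction with G 1
    have hG1 : G 1 = 0 := by
      rw [hGsymmPair 1 (Matrix.isSymm_one), hZs0]
      simp
    have := KEY1 αhat hαhat 0 hQ0 2 2 (by norm_num) (by norm_num)
    rw [map_zero, hG1, hμ0, hc₀0] at this
    have hGMhat : G Mhat = G C + G (Sm αhat) := by rw [hMhat, map_add]
    simp only [mul_zero, add_zero, zero_add, zero_sub, mul_zero] at this
    linarith


end Core


section Ball
variable {n : ℕ}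

lemma idx_cover (j : Fin (2*n)) : (∃ i, j = idx1 n i) ∨ (∃ i, j = idx2 n i) := by
  have hj := j.isLt
  by_cases h : (j : ℕ) < n
  · exact Or.inl ⟨⟨j, h⟩, by apply Fin.ext; simp [idx1]⟩
  · refine Or.inr ⟨⟨(j : ℕ) - n, by omega⟩, ?_⟩
    apply Fin.ext
    simp only [idx2]
    omega

lemma idx1_ne_idx2 (i i' : Fin n) : idx1 n i ≠ idx2 n i' := by
  intro h
  rw [Fin.ext_iff] at h
  simp only [idx1, idx2] at h
  have := i.isLt
  have := i'.isLt
  omega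

lemma sum_ballMat : ∑ i : Fin n, ballMat n i = (1 : Matrix (Fin (2*n)) (Fin (2*n)) ℝ) := by
  ext j k
  rw [Matrix.sum_apply]
  by_cases hjk : j = k
  · subst hjk
    rw [Matrix.one_apply_eq]
    have hj := j.isLt
    set i₀ : Fin n := if h : (j : ℕ) < n then ⟨j, h⟩ else ⟨(j : ℕ) - n, by omega⟩ with hi₀
    have hcond : ∀ i : Fin n, (j = idx1 n i ∨ j = idx2 n i) ↔ i = i₀ := by
      intro i
      have hival := i.isLt
      have hi₀val : (i₀ : ℕ) = if (j : ℕ) < n then (j : ℕ) else (j : ℕ) - n := by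
        rw [hi₀]
        split_ifs <;> rfl
      constructor
      · rintro (h | h) <;> rw [Fin.ext_iff] at h ⊢ <;>
          simp only [idx1, idx2] at h <;> rw [hi₀val] <;> split_ifs <;> omega
      · rintro rfl
        by_cases h : (j : ℕ) < n
        · left; apply Fin.ext; simp only [idx1]; rw [hi₀val]; simp [h]
        · right; apply Fin.ext; simp only [idx2]; rw [hi₀val]; split_ifs; omega
    have hterm : ∀ i : Fin n, ballMat n i j j = if i = i₀ then (1:ℝ) else 0 := by
      intro i
      rw [ballMat, Matrix.diagonal_apply_eq]
      simp only [hcond i]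
    rw [Finset.sum_congr rfl fun i _ => hterm i,
      Finset.sum_ite_eq' Finset.univ i₀ (fun _ => (1:ℝ))]
    simp
  · rw [Matrix.one_apply_ne hjk]
    exact Finset.sum_eq_zero fun i _ => by rw [ballMat, Matrix.diagonal_apply_ne _ hjk]

lemma ip_ballMat (X : Matrix (Fin (2*n)) (Fin (2*n)) ℝ) (i : Fin n) :
    ip (ballMat n i) X = X (idx1 n i) (idx1 n i) + X (idx2 n i) (idx2 n i) := by
  rw [ipEq]
  have hinner : ∀ j, ∑ k, ballMat n i j k * X k j
      = (if j = idx1 n i ∨ j = idx2 n i then (1:ℝ) else 0) * X j j := by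
    intro j
    rw [Finset.sum_eq_single j]
    · rw [ballMat, Matrix.diagonal_apply_eq]
    · intro k _ hkj
      rw [ballMat, Matrix.diagonal_apply_ne _ (Ne.symm hkj), zero_mul]
    · intro h; exact absurd (Finset.mem_univ j) h
  rw [Finset.sum_congr rfl fun j _ => hinner j]
  have hne := idx1_ne_idx2 (n := n) i i
  have hsplit : ∀ j : Fin (2*n), (if j = idx1 n i ∨ j = idx2 n i then (1:ℝ) else 0) * X j j
      = (if j = idx1 n i then X j j else 0) + (if j = idx2 n i then X j j else 0) := by
    intro j
    by_cases h1 : j = idx1 n i <;> by_cases h2 : j = idx2 n i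
    · exact absurd (h1 ▸ h2) hne
    · simp [h1, h2, hne, Ne.symm hne]
    · simp [h1, h2, hne, Ne.symm hne]
    · simp [h1, h2]
  rw [Finset.sum_congr rfl fun j _ => hsplit j, Finset.sum_add_distrib,
    Finset.sum_ite_eq' Finset.univ (idx1 n i) (fun j => X j j),
    Finset.sum_ite_eq' Finset.univ (idx2 n i) (fun j => X j j)]
  simp

end Ball

/-- Proposition 2: under the ball-constraint assumption, if (OPF) is feasible
and `α*` is an optimal solution of (DSDP), then with `S* = C + Σ_k α*_k A_k` one has
`v(SDP) = v(ŌPF_{S*})`, and `v(ŌPF_S) ≤ v(SDP)` for every PSD `S`: `S*` maximizes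
`v(ŌPF_S)` over PSD matrices `S`. -/
theorem stmt_12 {n : ℕ} (hn : 0 < n) {K : Type} [Fintype K]
    (C : Matrix (Fin (2 * n)) (Fin (2 * n)) ℝ) (hC : C.IsSymm)
    (A : K → Matrix (Fin (2 * n)) (Fin (2 * n)) ℝ) (hA : ∀ k, (A k).IsSymm)
    (b : K → ℝ)
    (e : Fin n → K) (he : Function.Injective e)
    (V : Fin n → ℝ) (hV : ∀ i, 0 < V i)
    (hball : ∀ i : Fin n, A (e i) = ballMat n i)
    (hb : ∀ i : Fin n, b (e i) = (V i) ^ 2)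
    (l u : Fin (2 * n) → ℝ)
    (hl : ∀ i : Fin n, l (idx1 n i) = -(V i) ∧ l (idx2 n i) = -(V i))
    (hu : ∀ i : Fin n, u (idx1 n i) = V i ∧ u (idx2 n i) = V i)
    (hfeas : ∃ x : Fin (2 * n) → ℝ, ∀ k, qf (A k) x ≤ b k)
    (αstar : K → ℝ) (hαstar : ∀ k, 0 ≤ αstar k)
    (hSstar : (C + ∑ k, αstar k • A k).PosSemidef)
    (hopt : ∑ k, -(b k) * αstar k
      = sSup {v : ℝ | ∃ α : K → ℝ, (∀ k, 0 ≤ α k) ∧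
          (C + ∑ k, α k • A k).PosSemidef ∧ v = ∑ k, -(b k) * α k}) :
    sInf {v : ℝ | ∃ X : Matrix (Fin (2 * n)) (Fin (2 * n)) ℝ,
            X.IsSymm ∧ X.PosSemidef ∧ (∀ k, ip (A k) X ≤ b k) ∧ v = ip C X}
      = sInf (OPFSbarVals C A b l u (C + ∑ k, αstar k • A k)) ∧
    (∀ S : Matrix (Fin (2 * n)) (Fin (2 * n)) ℝ, S.IsSymm → S.PosSemidef →
      sInf (OPFSbarVals C A b l u S)
        ≤ sInf {v : ℝ | ∃ X : Matrix (Fin (2 * n)) (Fin (2 * n)) ℝ,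
            X.IsSymm ∧ X.PosSemidef ∧ (∀ k, ip (A k) X ≤ b k) ∧ v = ip C X}) := by
  classical
  set SstarM : Matrix (Fin (2*n)) (Fin (2*n)) ℝ := C + ∑ k, αstar k • A k with hSstarM
  set SDPset : Set ℝ := {v : ℝ | ∃ X : Matrix (Fin (2 * n)) (Fin (2 * n)) ℝ,
      X.IsSymm ∧ X.PosSemidef ∧ (∀ k, ip (A k) X ≤ b k) ∧ v = ip C X} with hSDPset
  set dstar : ℝ := ∑ k, -(b k) * αstar k with hdstar
  have hlu : ∀ j : Fin (2*n), 0 < u j ∧ l j = -(u j) := by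
    intro j
    rcases idx_cover j with ⟨i, rfl⟩ | ⟨i, rfl⟩
    · exact ⟨by rw [(hu i).1]; exact hV i, by rw [(hu i).1, (hl i).1]⟩
    · exact ⟨by rw [(hu i).2]; exact hV i, by rw [(hu i).2, (hl i).2]⟩
  have ip_add_left : ∀ M N X : Matrix (Fin (2*n)) (Fin (2*n)) ℝ,
      ip (M + N) X = ip M X + ip N X := by
    intro M N X; rw [ip, ip, ip, Matrix.add_mul, Matrix.trace_add]
  have ip_sub_left : ∀ M N X : Matrix (Fin (2*n)) (Fin (2*n)) ℝ,
      ip (M - N) X = ip M X - ip N X := by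
    intro M N X; rw [ip, ip, ip, Matrix.sub_mul, Matrix.trace_sub]
  have ip_sum_smul : ∀ (α : K → ℝ) (X : Matrix (Fin (2*n)) (Fin (2*n)) ℝ),
      ip (∑ k, α k • A k) X = ∑ k, α k * ip (A k) X := by
    intro α X
    rw [ip, Matrix.sum_mul, Matrix.trace_sum]
    exact Finset.sum_congr rfl fun k _ => by
      rw [Matrix.smul_mul, Matrix.trace_smul, smul_eq_mul, ip]
  have hwd : ∀ X : Matrix (Fin (2*n)) (Fin (2*n)) ℝ, X.PosSemidef →
      (∀ k, ip (A k) X ≤ b k) → ∀ α : K → ℝ, (∀ k, 0 ≤ α k) →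
      (C + ∑ k, α k • A k).PosSemidef → ∑ k, -(b k) * α k ≤ ip C X := by
    intro X hX hXc α hα hM
    have h0 : 0 ≤ ip (C + ∑ k, α k • A k) X := ip_psd_nonneg hM hX
    rw [ip_add_left, ip_sum_smul] at h0
    have hsum : ∑ k, α k * ip (A k) X ≤ ∑ k, α k * b k :=
      Finset.sum_le_sum fun k _ => mul_le_mul_of_nonneg_left (hXc k) (hα k)
    have hneg : ∑ k, -(b k) * α k = -∑ k, α k * b k := by
      rw [← Finset.sum_neg_distrib]
      exact Finset.sum_congr rfl fun k _ => by ring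
    rw [hneg]
    linarith
  obtain ⟨x₀, hx₀⟩ := hfeas
  set X₀ := vecMulVec x₀ x₀ with hX₀
  have hX₀symm : X₀.IsSymm := vecMulVec_symm x₀
  have hX₀psd : X₀.PosSemidef := vecMulVec_psd x₀
  have hX₀c : ∀ k, ip (A k) X₀ ≤ b k := fun k => by
    rw [hX₀, ip_vecMulVec]; exact hx₀ k
  have hSDPne : SDPset.Nonempty := ⟨ip C X₀, ⟨X₀, hX₀symm, hX₀psd, hX₀c, rfl⟩⟩
  have hSDPbdd : BddBelow SDPset := by
    refine ⟨dstar, ?_⟩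
    rintro v ⟨X, hs, hp, hc2, rfl⟩
    exact hwd X hp hc2 αstar hαstar hSstar
  have hdual_le : ∀ α : K → ℝ, (∀ k, 0 ≤ α k) → (C + ∑ k, α k • A k).PosSemidef →
      ∑ k, -(b k) * α k ≤ dstar := by
    intro α hα hM
    rw [hopt]
    refine le_csSup ⟨ip C X₀, ?_⟩ ⟨α, hα, hM, rfl⟩
    rintro w ⟨β, hβ, hMβ, rfl⟩
    exact hwd X₀ hX₀psd hX₀c β hβ hMβ
  set αhat : K → ℝ := fun k => αstar k + ∑ i : Fin n, (if k = e i then 1 else 0) with hαhat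
  have hαhat_nonneg : ∀ k, 0 ≤ αhat k := by
    intro k
    refine add_nonneg (hαstar k) (Finset.sum_nonneg fun i _ => ?_)
    split <;> norm_num
  have hSαhat : (∑ k, αhat k • A k) = (∑ k, αstar k • A k) + 1 := by
    rw [hαhat]
    simp only [add_smul, Finset.sum_add_distrib]
    congr 1
    have h1 : ∀ k : K, (∑ i : Fin n, if k = e i then (1:ℝ) else 0) • A k
        = ∑ i : Fin n, (if k = e i then A k else 0) := by
      intro k
      rw [Finset.sum_smul]
      exact Finset.sum_congr rfl fun i _ => by split <;> simp
    rw [Finset.sum_congr rfl fun k _ => h1 k, Finset.sum_comm]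
    have h2 : ∀ i : Fin n, (∑ k : K, if k = e i then A k else 0) = ballMat n i := by
      intro i
      rw [Finset.sum_ite_eq' Finset.univ (e i) (fun k => A k)]
      simp [hball i]
    rw [Finset.sum_congr rfl fun i _ => h2 i, sum_ballMat]
  have hslater : (C + ∑ k, αhat k • A k).PosDef := by
    rw [hSαhat, ← add_assoc, ← hSstarM]
    refine PosDef.of_dotProduct_mulVec_pos (hSstar.1.add Matrix.isHermitian_one) fun y hy => ?_
    have h1 : star y ⬝ᵥ ((SstarM + 1).mulVec y) = y ⬝ᵥ SstarM.mulVec y + y ⬝ᵥ y := by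
      rw [Matrix.add_mulVec, dotProduct_add, Matrix.one_mulVec, star_trivial]
    have h2 : 0 < y ⬝ᵥ y := by
      have h := Matrix.dotProduct_self_star_pos_iff (v := y)
      rw [star_trivial] at h
      exact h.mpr hy
    have h3 : 0 ≤ y ⬝ᵥ SstarM.mulVec y := by
      simpa [star_trivial] using hSstar.dotProduct_mulVec_nonneg y
    rw [h1]
    linarith
  have hstrong : sInf SDPset ≤ dstar := by
    by_contra hcon
    push_neg at hcon
    obtain ⟨X, hs, hp, hc2, hobj⟩ := sdp_strong_duality C hC A hA b dstar αhat
      hαhat_nonneg hslater hdual_le ((sInf SDPset - dstar)/2) (by linarith)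
    have hmem : ip C X ∈ SDPset := ⟨X, hs, hp, hc2, rfl⟩
    have := csInf_le hSDPbdd hmem
    linarith
  have hdiag : ∀ X : Matrix (Fin (2*n)) (Fin (2*n)) ℝ, X.PosSemidef →
      (∀ k, ip (A k) X ≤ b k) → ∀ j, X j j ≤ u j ^ 2 := by
    intro X hX hXc j
    rcases idx_cover j with ⟨i, rfl⟩ | ⟨i, rfl⟩
    · have h := hXc (e i)
      rw [hball i, hb i, ip_ballMat] at h
      have h2 := psd_diag_nonneg hX (idx2 n i)
      rw [(hu i).1]
      nlinarith
    · have h := hXc (e i)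
      rw [hball i, hb i, ip_ballMat] at h
      have h2 := psd_diag_nonneg hX (idx1 n i)
      rw [(hu i).2]
      nlinarith
  have hoff : ∀ X : Matrix (Fin (2*n)) (Fin (2*n)) ℝ, X.PosSemidef →
      (∀ k, ip (A k) X ≤ b k) → ∀ i j, |X i j| ≤ u i * u j := by
    intro X hX hXc i j
    have h1 := entry_sq_le hX i j
    have h2 := hdiag X hX hXc i
    have h3 := hdiag X hX hXc j
    have h4 := psd_diag_nonneg hX i
    have h5 := psd_diag_nonneg hX j
    have hui := (hlu i).1
    have huj := (hlu j).1
    rw [abs_le]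
    constructor <;> nlinarith [sq_nonneg (X i j - u i * u j), sq_nonneg (X i j + u i * u j),
      mul_pos hui huj, sq_nonneg (u i * u j)]
  have hmc0 : ∀ X : Matrix (Fin (2*n)) (Fin (2*n)) ℝ, X.PosSemidef →
      (∀ k, ip (A k) X ≤ b k) → mcCormick l u (0 : Fin (2*n) → ℝ) X := by
    intro X hX hXc i j _
    have h := abs_le.mp (hoff X hX hXc i j)
    have hli := (hlu i).2
    have hlj := (hlu j).2
    simp only [hli, hlj, Pi.zero_apply, mul_zero, zero_add, add_zero, zero_sub, neg_mul,
      neg_neg, mul_neg, ge_iff_le]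
    refine ⟨by linarith [h.2], by linarith [h.2], by linarith [h.1], by linarith [h.1]⟩
  have hOPFne : ∀ S : Matrix (Fin (2*n)) (Fin (2*n)) ℝ,
      (OPFSbarVals C A b l u S).Nonempty :=
    fun S => ⟨qf S 0 + ip (C - S) X₀, 0, X₀, hX₀symm, hX₀c, hmc0 X₀ hX₀psd hX₀c, rfl⟩
  have hxYb : ∀ (x : Fin (2*n) → ℝ) (Y : Matrix (Fin (2*n)) (Fin (2*n)) ℝ), Y.IsSymm →
      mcCormick l u x Y → ∀ i j, |Y i j| ≤ 3 * (u i * u j) := by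
    intro x Y hYs hmc
    have hx : ∀ i, |x i| ≤ u i := by
      intro i
      obtain ⟨m1, m2, m3, m4⟩ := hmc i i (le_refl i)
      have hui := (hlu i).1
      have hli := (hlu i).2
      rw [hli] at m1 m2 m4
      rw [abs_le]
      constructor <;> nlinarith
    have key : ∀ i j : Fin (2*n), i ≤ j → |Y i j| ≤ 3 * (u i * u j) := by
      intro i j hij
      obtain ⟨m1, m2, m3, m4⟩ := hmc i j hij
      have hxi := abs_le.mp (hx i)
      have hxj := abs_le.mp (hx j)
      have hui := (hlu i).1
      have huj := (hlu j).1
      have hli := (hlu i).2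
      have hlj := (hlu j).2
      rw [hli] at m1 m4
      rw [hlj] at m2 m4
      rw [abs_le]
      constructor
      · nlinarith [mul_le_mul_of_nonneg_left hxj.1 hui.le,
          mul_le_mul_of_nonneg_left hxi.1 huj.le]
      · nlinarith [mul_le_mul_of_nonneg_left hxj.2 hui.le,
          mul_le_mul_of_nonneg_left hxi.2 huj.le]
    intro i j
    rcases le_total i j with hij | hij
    · exact key i j hij
    · have hYij : Y i j = Y j i := hYs.apply j i
      rw [hYij]
      have := key j i hij
      calc |Y j i| ≤ 3 * (u j * u i) := this
        _ = 3 * (u i * u j) := by ring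
  have hOPFbdd : ∀ S : Matrix (Fin (2*n)) (Fin (2*n)) ℝ, S.PosSemidef →
      BddBelow (OPFSbarVals C A b l u S) := by
    intro S hS
    refine ⟨-(∑ i, ∑ j, |(C - S) i j| * (3 * (u j * u i))), ?_⟩
    rintro v ⟨x, Y, hYs, hYc, hmc, rfl⟩
    have hY := hxYb x Y hYs hmc
    have h1 : 0 ≤ qf S x := qf_nonneg hS x
    have h3 : ∀ i j : Fin (2*n),
        -( |(C - S) i j| * (3 * (u j * u i))) ≤ (C - S) i j * Y j i := by
      intro i j
      have hb2 := hY j i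
      have h4 : |(C - S) i j * Y j i| ≤ |(C - S) i j| * (3 * (u j * u i)) := by
        rw [abs_mul]
        exact mul_le_mul_of_nonneg_left hb2 (abs_nonneg _)
      linarith [neg_abs_le ((C - S) i j * Y j i)]
    have h5 : -(∑ i, ∑ j, |(C - S) i j| * (3 * (u j * u i))) ≤ ip (C - S) Y := by
      rw [ipEq, ← Finset.sum_neg_distrib]
      refine Finset.sum_le_sum fun i _ => ?_
      rw [← Finset.sum_neg_distrib]
      exact Finset.sum_le_sum fun j _ => h3 i j
    linarith
  have part2 : ∀ S : Matrix (Fin (2*n)) (Fin (2*n)) ℝ, S.IsSymm → S.PosSemidef →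
      sInf (OPFSbarVals C A b l u S) ≤ sInf SDPset := by
    intro S hSsym hSpsd
    refine le_csInf hSDPne ?_
    rintro v ⟨X, hs, hp, hc2, rfl⟩
    have hmem : qf S 0 + ip (C - S) X ∈ OPFSbarVals C A b l u S :=
      ⟨0, X, hs, hc2, hmc0 X hp hc2, rfl⟩
    have hle := csInf_le (hOPFbdd S hSpsd) hmem
    have hq0 : qf S (0 : Fin (2*n) → ℝ) = 0 := by simp [qf]
    have hip2 : ip (C - S) X = ip C X - ip S X := ip_sub_left C S X
    have hps : 0 ≤ ip S X := ip_psd_nonneg hSpsd hp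
    linarith
  have part1 : sInf SDPset ≤ sInf (OPFSbarVals C A b l u SstarM) := by
    refine le_csInf (hOPFne SstarM) ?_
    rintro w ⟨x, Y, hYs, hYc, hmc, rfl⟩
    have h1 : 0 ≤ qf SstarM x := qf_nonneg hSstar x
    have h2 : ip (C - SstarM) Y = -∑ k, αstar k * ip (A k) Y := by
      have hCS : C - SstarM = -(∑ k, αstar k • A k) := by rw [hSstarM]; abel
      rw [hCS, ip, Matrix.neg_mul, Matrix.trace_neg, ← ip, ip_sum_smul]
    have h3 : ∑ k, αstar k * ip (A k) Y ≤ ∑ k, αstar k * b k :=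
      Finset.sum_le_sum fun k _ => mul_le_mul_of_nonneg_left (hYc k) (hαstar k)
    have h4 : dstar = -∑ k, αstar k * b k := by
      rw [hdstar, ← Finset.sum_neg_distrib]
      exact Finset.sum_congr rfl fun k _ => by ring
    have h5 : dstar ≤ qf SstarM x + ip (C - SstarM) Y := by
      rw [h2, h4]; linarith
    linarith
  exact ⟨le_antisymm part1 (part2 SstarM (herm_symm hSstar.1) hSstar),
    fun S hS1 hS2 => part2 S hS1 hS2⟩
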